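/- Let ν* ∈ P_+ be an equilibrium measure for G and let (a_k)_{k≥0} be a Leja sequence for G. If a subsequence (σ_{n_i}) of the measures (σ_n) converges pointwise on X to a measure σ, then σ is also an equilibrium measure for G, i.e. σ ∈ P and G(σ,σ) = Γ(G). -/

import Mathlib

open Finset

lemma quad_zero (c q ε : ℝ) (hε : 0 < ε)
    (h : ∀ t : ℝ, |t| ≤ ε → 0 ≤ 2*t*c + t^2*q) : c = 0 := by
  by_contra hc
  have hq1 : (0:ℝ) < |q| + 1 := by positivity
  set δ := min ε (|c| / (|q| + 1)) with hδ
  have hδpos : 0 < δ := lt_min hε (div_pos (abs_pos.2 hc) hq1)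
  have hδε : δ ≤ ε := min_le_left _ _
  have hδq : δ * (|q| + 1) ≤ |c| := by
    have h1 : δ ≤ |c| / (|q| + 1) := min_le_right _ _
    calc δ * (|q|+1) ≤ (|c|/(|q|+1)) * (|q|+1) := by nlinarith
    _ = |c| := div_mul_cancel₀ _ (ne_of_gt hq1)
  rcases (lt_or_gt_of_ne hc) with h1 | h1
  · have h2 := h δ (by rw [abs_of_pos hδpos]; exact hδε)
    have hcabs : |c| = -c := abs_of_neg h1
    nlinarith [le_abs_self q, mul_pos hδpos hδpos,
      mul_le_mul_of_nonneg_left hδq hδpos.le]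
  · have h2 := h (-δ) (by rw [abs_neg, abs_of_pos hδpos]; exact hδε)
    have hcabs : |c| = c := abs_of_pos h1
    nlinarith [le_abs_self q, mul_pos hδpos hδpos,
      mul_le_mul_of_nonneg_left hδq hδpos.le]

lemma frostman {X : Type*} [Fintype X] [DecidableEq X]
    (G : X → X → ℝ) (hGsym : ∀ x y, G x y = G y x)
    (νs : X → ℝ) (hνs_pos : ∀ x, 0 < νs x) (hνs_sum : ∑ x, νs x = 1)
    (hmin : ∀ ν : X → ℝ, (∀ x, 0 ≤ ν x) → ∑ x, ν x = 1 →
      ∑ x, ∑ y, νs x * G x y * νs y ≤ ∑ x, ∑ y, ν x * G x y * ν y) :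
    ∀ x, ∑ y, G x y * νs y = ∑ x, ∑ y, νs x * G x y * νs y := by
  have hconst : ∀ x0 z0 : X, (∑ y, G x0 y * νs y) = ∑ y, G z0 y * νs y := by
    intro x0 z0
    by_cases hxz : x0 = z0
    · rw [hxz]
    set F : X → ℝ := fun x => ∑ y, G x y * νs y with hFdef
    set d : X → ℝ := fun w => (if w = x0 then (1:ℝ) else 0) - (if w = z0 then 1 else 0) with hd
    have hdx : d x0 = 1 := by simp [hd, hxz]
    have hdz : d z0 = -1 := by simp [hd, Ne.symm hxz]
    have hdsum : ∑ w, d w = 0 := by simp [hd, Finset.sum_sub_distrib]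
    have hεpos : (0:ℝ) < min (νs x0) (νs z0) := lt_min (hνs_pos x0) (hνs_pos z0)
    have hdF : ∀ g : X → ℝ, ∑ x, d x * g x = g x0 - g z0 := by
      intro g
      simp [hd, sub_mul, Finset.sum_sub_distrib, Finset.sum_ite_eq']
    have hA : ∑ x, ∑ y, d x * G x y * νs y = F x0 - F z0 := by
      simp_rw [mul_assoc, ← Finset.mul_sum]
      exact hdF F
    have hB : ∑ x, ∑ y, νs x * G x y * d y = F x0 - F z0 := by
      rw [Finset.sum_comm]
      have hpt : ∀ y x, νs x * G x y * d y = d y * (G y x * νs x) := by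
        intro y x; rw [hGsym x y]; ring
      simp_rw [hpt, ← Finset.mul_sum]
      exact hdF F
    have key : ∀ t : ℝ, |t| ≤ min (νs x0) (νs z0) →
        0 ≤ 2*t*(F x0 - F z0) + t^2*(∑ x, ∑ y, d x * G x y * d y) := by
      intro t ht
      have ht1 : -(min (νs x0) (νs z0)) ≤ t := (abs_le.mp ht).1
      have ht2 : t ≤ min (νs x0) (νs z0) := (abs_le.mp ht).2
      have hnn : ∀ w, 0 ≤ νs w + t * d w := by
        intro w
        by_cases hw : w = x0
        · subst hw; rw [hdx]
          have := min_le_left (νs w) (νs z0)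
          rw [hd] at *
          simp only [mul_one]
          linarith [min_le_left (νs w) (νs z0)]
        · by_cases hw2 : w = z0
          · subst hw2; rw [hdz]
            linarith [min_le_right (νs x0) (νs w)]
          · have hdw : d w = 0 := by simp [hd, hw, hw2]
            rw [hdw]; simpa using (hνs_pos w).le
      have hsum1 : ∑ w, (νs w + t * d w) = 1 := by
        rw [Finset.sum_add_distrib, ← Finset.mul_sum, hdsum, hνs_sum]; ring
      have hlow := hmin (fun w => νs w + t * d w) hnn hsum1
      have hexp : ∑ x, ∑ y, (νs x + t*d x) * G x y * (νs y + t*d y)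
          = (∑ x, ∑ y, νs x * G x y * νs y) + 2*t*(F x0 - F z0)
            + t^2*(∑ x, ∑ y, d x * G x y * d y) := by
        have hpt : ∀ x y, (νs x + t*d x) * G x y * (νs y + t*d y)
            = νs x * G x y * νs y + t * (d x * G x y * νs y)
              + t * (νs x * G x y * d y) + t^2 * (d x * G x y * d y) := by
          intro x y; ring
        simp_rw [hpt, Finset.sum_add_distrib, ← Finset.mul_sum]
        rw [hA, hB]
        ring
      rw [hexp] at hlow
      linarith
    have hc0 := quad_zero (F x0 - F z0) (∑ x, ∑ y, d x * G x y * d y)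
      (min (νs x0) (νs z0)) hεpos key
    have : F x0 = F z0 := by linarith
    exact this
  intro x
  have hsplit : ∑ x', ∑ y, νs x' * G x' y * νs y = ∑ x', νs x' * ∑ y, G x' y * νs y := by
    simp_rw [mul_assoc, ← Finset.mul_sum]
  rw [hsplit]
  have : ∀ x' : X, νs x' * ∑ y, G x' y * νs y = νs x' * ∑ y, G x y * νs y := by
    intro x'; rw [hconst x' x]
  rw [Finset.sum_congr rfl fun x' _ => this x', ← Finset.sum_mul, hνs_sum, one_mul]

/-- If `ν* ∈ P₊` is an equilibrium measure for `G`, `(a_k)` is a Leja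
sequence for `G`, and a subsequence `σ_{n_i}` of the empirical measures `σₙ` converges
pointwise on `X` to a measure `σ`, then `σ` is also an equilibrium measure:
`σ ∈ P` and `G(σ,σ) = Γ(G) = G(ν*,ν*)`. -/
theorem leja_weak_star_limit {X : Type*} [Fintype X] [Nonempty X] [DecidableEq X]
    (G : X → X → ℝ) (hGsym : ∀ x y, G x y = G y x)
    (νs : X → ℝ) (hνs_pos : ∀ x, 0 < νs x) (hνs_sum : ∑ x, νs x = 1)
    (hmin : ∀ ν : X → ℝ, (∀ x, 0 ≤ ν x) → ∑ x, ν x = 1 →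
      ∑ x, ∑ y, νs x * G x y * νs y ≤ ∑ x, ∑ y, ν x * G x y * ν y)
    (a : ℕ → X)
    (hleja : ∀ k : ℕ, 1 ≤ k → ∀ x : X,
      ∑ j ∈ Finset.range k, G (a k) (a j) ≤ ∑ j ∈ Finset.range k, G x (a j))
    (φ : ℕ → ℕ) (hφ : StrictMono φ) (hφ1 : ∀ i, 1 ≤ φ i)
    (σ : X → ℝ)
    (hconv : ∀ x : X,
      Filter.Tendsto
        (fun i => (∑ j ∈ Finset.range (φ i), if a j = x then (1 : ℝ) else 0) / (φ i))
        Filter.atTop (nhds (σ x))) :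
    (∀ x, 0 ≤ σ x) ∧ (∑ x, σ x = 1) ∧
      ∑ x, ∑ y, σ x * G x y * σ y = ∑ x, ∑ y, νs x * G x y * νs y := by
  have hF := frostman G hGsym νs hνs_pos hνs_sum hmin
  set Γ : ℝ := ∑ x, ∑ y, νs x * G x y * νs y with hΓdef
  have hφpos : ∀ i, (0:ℝ) < (φ i : ℝ) := by
    intro i; exact_mod_cast Nat.lt_of_lt_of_le Nat.zero_lt_one (hφ1 i)
  -- nonnegativity
  have hσnn : ∀ x, 0 ≤ σ x := by
    intro x
    refine ge_of_tendsto' (hconv x) ?_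
    intro i
    exact div_nonneg (Finset.sum_nonneg fun j _ => by positivity) (hφpos i).le
  -- sum one
  have hsum_s : ∀ i, ∑ x, (∑ j ∈ Finset.range (φ i), if a j = x then (1:ℝ) else 0) / (φ i) = 1 := by
    intro i
    rw [← Finset.sum_div, Finset.sum_comm]
    have : ∀ j : ℕ, ∑ x, (if a j = x then (1:ℝ) else 0) = 1 := by
      intro j; simp [Finset.sum_ite_eq]
    rw [Finset.sum_congr rfl fun j _ => this j, Finset.sum_const, Finset.card_range,
      nsmul_eq_mul, mul_one, div_self (hφpos i).ne']
  have hσsum : ∑ x, σ x = 1 := by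
    have h1 : Filter.Tendsto
        (fun i => ∑ x, (∑ j ∈ Finset.range (φ i), if a j = x then (1:ℝ) else 0) / (φ i))
        Filter.atTop (nhds (∑ x, σ x)) :=
      tendsto_finset_sum _ fun x _ => hconv x
    have h2 : (fun i => ∑ x, (∑ j ∈ Finset.range (φ i), if a j = x then (1:ℝ) else 0) / (φ i))
        = fun _ => (1:ℝ) := funext fun i => hsum_s i
    rw [h2] at h1
    exact tendsto_nhds_unique h1 tendsto_const_nhds
  refine ⟨hσnn, hσsum, ?_⟩
  -- Leja averaged bound
  have hlejaΓ : ∀ k : ℕ, ∑ j ∈ Finset.range k, G (a k) (a j) ≤ (k:ℝ) * Γ := by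
    intro k
    rcases Nat.eq_zero_or_pos k with hk | hk
    · simp [hk]
    have h2 : ∑ x, νs x * (∑ j ∈ Finset.range k, G (a k) (a j))
        ≤ ∑ x, νs x * (∑ j ∈ Finset.range k, G x (a j)) :=
      Finset.sum_le_sum fun x _ => mul_le_mul_of_nonneg_left (hleja k hk x) (hνs_pos x).le
    rw [← Finset.sum_mul, hνs_sum, one_mul] at h2
    have h3 : ∑ x, νs x * (∑ j ∈ Finset.range k, G x (a j)) = (k:ℝ) * Γ := by
      simp_rw [Finset.mul_sum]
      rw [Finset.sum_comm]
      have hj : ∀ j : ℕ, ∑ x, νs x * G x (a j) = Γ := by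
        intro j
        rw [← hF (a j)]
        exact Finset.sum_congr rfl fun x _ => by rw [hGsym (a j) x]; ring
      rw [Finset.sum_congr rfl fun j _ => hj j, Finset.sum_const, Finset.card_range,
        nsmul_eq_mul]
    linarith
  -- diagonal bound
  set M : ℝ := ∑ x, |G x x| with hMdef
  have hM : ∀ n : ℕ, G (a n) (a n) ≤ M := by
    intro n
    rw [hMdef]
    exact le_trans (le_abs_self _)
      (Finset.single_le_sum (f := fun x => |G x x|) (fun x _ => abs_nonneg _)
        (Finset.mem_univ (a n)))
  -- double sum
  set D : ℕ → ℝ := fun n => ∑ j ∈ Finset.range n, ∑ k ∈ Finset.range n, G (a j) (a k) with hD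
  have hDrec : ∀ n, D (n+1) = D n + 2 * (∑ j ∈ Finset.range n, G (a n) (a j)) + G (a n) (a n) := by
    intro n
    simp only [hD, Finset.sum_range_succ, Finset.sum_add_distrib]
    have : ∑ j ∈ Finset.range n, G (a j) (a n) = ∑ j ∈ Finset.range n, G (a n) (a j) :=
      Finset.sum_congr rfl fun j _ => hGsym _ _
    rw [this]; ring
  have hDbound : ∀ n : ℕ, D n ≤ (n:ℝ) * ((n:ℝ) - 1) * Γ + (n:ℝ) * M := by
    intro n
    induction n with
    | zero => simp [hD]
    | succ n ih =>
      rw [hDrec n]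
      have h1 := hlejaΓ n
      have h2 := hM n
      push_cast
      nlinarith
  -- energy identity
  have hTD : ∀ n : ℕ, (0:ℝ) < (n:ℝ) →
      ∑ x, ∑ y, ((∑ j ∈ Finset.range n, if a j = x then (1:ℝ) else 0) / n) * G x y *
        ((∑ j ∈ Finset.range n, if a j = y then (1:ℝ) else 0) / n) = D n / (n:ℝ)^2 := by
    intro n hn
    have hnum : ∑ x, ∑ y, (∑ j ∈ Finset.range n, if a j = x then (1:ℝ) else 0) * G x y *
        (∑ j ∈ Finset.range n, if a j = y then (1:ℝ) else 0) = D n := by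
      have hT : ∀ x, ∑ y, G x y * (∑ k ∈ Finset.range n, if a k = y then (1:ℝ) else 0)
          = ∑ k ∈ Finset.range n, G x (a k) := by
        intro x
        simp_rw [Finset.mul_sum]
        rw [Finset.sum_comm]
        exact Finset.sum_congr rfl fun k _ => by simp [mul_ite, Finset.sum_ite_eq]
      have step1 : ∑ x, ∑ y, (∑ j ∈ Finset.range n, if a j = x then (1:ℝ) else 0) * G x y *
          (∑ j ∈ Finset.range n, if a j = y then (1:ℝ) else 0)
          = ∑ x, (∑ j ∈ Finset.range n, if a j = x then (1:ℝ) else 0) *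
            (∑ k ∈ Finset.range n, G x (a k)) := by
        apply Finset.sum_congr rfl; intro x _
        rw [← hT x, Finset.mul_sum]
        exact Finset.sum_congr rfl fun y _ => by ring
      have step2 : ∑ x, (∑ j ∈ Finset.range n, if a j = x then (1:ℝ) else 0) *
          (∑ k ∈ Finset.range n, G x (a k))
          = ∑ j ∈ Finset.range n, ∑ k ∈ Finset.range n, G (a j) (a k) := by
        simp_rw [Finset.sum_mul]
        rw [Finset.sum_comm]
        exact Finset.sum_congr rfl fun j _ => by simp [ite_mul, Finset.sum_ite_eq]
      rw [step1, step2]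
    have hdiv : (∑ x, ∑ y, (∑ j ∈ Finset.range n, if a j = x then (1:ℝ) else 0) * G x y *
          (∑ j ∈ Finset.range n, if a j = y then (1:ℝ) else 0)) / (n:ℝ)^2
        = ∑ x, ∑ y, ((∑ j ∈ Finset.range n, if a j = x then (1:ℝ) else 0) / n) * G x y *
        ((∑ j ∈ Finset.range n, if a j = y then (1:ℝ) else 0) / n) := by
      rw [Finset.sum_div]
      apply Finset.sum_congr rfl; intro x _
      rw [Finset.sum_div]
      apply Finset.sum_congr rfl; intro y _
      ring
    rw [← hnum]
    exact hdiv.symm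
  -- limit of empirical energies
  have hσG : Filter.Tendsto (fun i => ∑ x, ∑ y,
      ((∑ j ∈ Finset.range (φ i), if a j = x then (1:ℝ) else 0) / (φ i)) * G x y *
      ((∑ j ∈ Finset.range (φ i), if a j = y then (1:ℝ) else 0) / (φ i)))
      Filter.atTop (nhds (∑ x, ∑ y, σ x * G x y * σ y)) := by
    apply tendsto_finset_sum; intro x _
    apply tendsto_finset_sum; intro y _
    exact ((hconv x).mul_const (G x y)).mul (hconv y)
  have hinv : Filter.Tendsto (fun i => ((φ i : ℝ))⁻¹) Filter.atTop (nhds 0) :=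
    tendsto_inv_atTop_zero.comp (tendsto_natCast_atTop_atTop.comp hφ.tendsto_atTop)
  have hbtend : Filter.Tendsto (fun i => Γ * (1 - ((φ i:ℝ))⁻¹) + M * ((φ i:ℝ))⁻¹)
      Filter.atTop (nhds Γ) := by
    have h1 : Filter.Tendsto (fun i => (1:ℝ) - ((φ i:ℝ))⁻¹) Filter.atTop (nhds (1 - 0)) :=
      tendsto_const_nhds.sub hinv
    have h2 := (h1.const_mul Γ).add (hinv.const_mul M)
    simpa using h2
  have hle : ∑ x, ∑ y, σ x * G x y * σ y ≤ Γ := by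
    refine le_of_tendsto_of_tendsto' hσG hbtend ?_
    intro i
    rw [hTD (φ i) (hφpos i)]
    have hb := hDbound (φ i)
    have hn := hφpos i
    rw [div_le_iff₀ (by positivity)]
    have heq : (Γ * (1 - ((φ i:ℝ))⁻¹) + M * ((φ i:ℝ))⁻¹) * ((φ i:ℝ))^2
        = (φ i:ℝ) * ((φ i:ℝ) - 1) * Γ + (φ i:ℝ) * M := by
      field_simp
    rw [heq]; exact hb
  exact le_antisymm hle (hmin σ hσnn hσsum)
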